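/- There is no geometric criterion based solely on 'smallest area' determining which sub-triangle is free of critical points: there exists a quartic p with distinct roots 0, 1, a, b, with 0 interior to conv{1,a,b}, such that the sub-triangle of smallest area among (0,1,a), (0,a,b), (0,b,1) does contain a root of p'. -/

import Mathlib

open Polynomial

/-- Twice the (unsigned) area of the triangle with vertices `u, v, w` in `ℂ`,
halved: the usual cross-product formula. -/
noncomputable def triArea (u v w : ℂ) : ℝ :=
  |((v - u) * (starRingEnd ℂ) (w - u)).im| / 2

def det3 (u v w : ℂ) : ℝ :=
  (v.re - u.re) * (w.im - u.im) - (v.im - u.im) * (w.re - u.re)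

lemma combo_mem_hull (p q r : ℂ) {c1 c2 c3 : ℝ} (h1 : 0 ≤ c1) (h2 : 0 ≤ c2)
    (h3 : 0 ≤ c3) (hs : c1 + c2 + c3 = 1) :
    c1 • p + c2 • q + c3 • r ∈ convexHull ℝ ({p, q, r} : Set ℂ) := by
  have h := Finset.centerMass_mem_convexHull (t := (Finset.univ : Finset (Fin 3)))
    (w := ![c1, c2, c3]) (z := ![p, q, r]) (s := ({p, q, r} : Set ℂ))
    (by intro i _; fin_cases i <;> simpa)
    (by simp [Fin.sum_univ_three, hs])
    (by intro i _; fin_cases i <;> simp)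
  rw [Finset.centerMass, show ∑ i, ![c1,c2,c3] i = 1 by simp [Fin.sum_univ_three, hs]] at h
  simpa [Fin.sum_univ_three, add_assoc] using h

lemma mem_interior_tri (p q r z : ℂ)
    (h1 : 0 < det3 z q r / det3 p q r)
    (h2 : 0 < det3 p z r / det3 p q r)
    (h3 : 0 < det3 p q z / det3 p q r) :
    z ∈ interior (convexHull ℝ ({p, q, r} : Set ℂ)) := by
  have hD : det3 p q r ≠ 0 := by
    intro h; rw [h] at h1; simp at h1
  refine mem_interior.2 ⟨{x | 0 < det3 x q r / det3 p q r ∧ 0 < det3 p x r / det3 p q r ∧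
      0 < det3 p q x / det3 p q r}, ?_, ?_, ⟨h1, h2, h3⟩⟩
  · rintro x ⟨hx1, hx2, hx3⟩
    have hsum : det3 x q r / det3 p q r + det3 p x r / det3 p q r
        + det3 p q x / det3 p q r = 1 := by
      rw [← add_div, ← add_div, div_eq_one_iff_eq hD]
      unfold det3; ring
    have key : (det3 x q r) • p + (det3 p x r) • q + (det3 p q x) • r
        = (det3 p q r) • x := by
      apply Complex.ext <;>
        simp only [Complex.add_re, Complex.add_im, Complex.smul_re, Complex.smul_im,
          smul_eq_mul] <;> (unfold det3; ring)
    have hcombo : (det3 x q r / det3 p q r) • p + (det3 p x r / det3 p q r) • q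
        + (det3 p q x / det3 p q r) • r = x := by
      rw [div_eq_inv_mul, div_eq_inv_mul, div_eq_inv_mul, mul_smul, mul_smul, mul_smul,
        ← smul_add, ← smul_add, key, smul_smul, inv_mul_cancel₀ hD, one_smul]
    have := combo_mem_hull p q r hx1.le hx2.le hx3.le hsum
    rwa [hcombo] at this
  · have c1 : Continuous fun x : ℂ => det3 x q r / det3 p q r := by
      unfold det3; fun_prop
    have c2 : Continuous fun x : ℂ => det3 p x r / det3 p q r := by
      unfold det3; fun_prop
    have c3 : Continuous fun x : ℂ => det3 p q x / det3 p q r := by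
      unfold det3; fun_prop
    exact (isOpen_lt continuous_const c1).inter
      ((isOpen_lt continuous_const c2).inter (isOpen_lt continuous_const c3))

/-- "Smallest area" is not a valid criterion: there is a quartic
`p(z) = z(z-1)(z-a)(z-b)` with `0` interior to `conv{1,a,b}` such that the
sub-triangle of smallest area among `(0,1,a)`, `(0,a,b)`, `(0,b,1)` does
contain a root of `p'`. -/
theorem smallest_area_not_criterion :
    ∃ a b : ℂ, a ≠ 0 ∧ b ≠ 0 ∧ a ≠ 1 ∧ b ≠ 1 ∧ a ≠ b ∧
      (0 : ℂ) ∈ interior (convexHull ℝ ({1, a, b} : Set ℂ)) ∧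
      ∃ u v : ℂ,
        ((u, v) = (1, a) ∨ (u, v) = (a, b) ∨ (u, v) = (b, 1)) ∧
        triArea 0 u v ≤ triArea 0 1 a ∧
        triArea 0 u v ≤ triArea 0 a b ∧
        triArea 0 u v ≤ triArea 0 b 1 ∧
        ∃ w : ℂ,
          eval w (derivative (X * (X - C 1) * (X - C a) * (X - C b))) = 0 ∧
          w ∈ interior (convexHull ℝ ({0, u, v} : Set ℂ)) := by
  refine ⟨⟨-3, -4⟩, ⟨-1/7, 11/7⟩, ?_, ?_, ?_, ?_, ?_, ?_, ⟨-1/7, 11/7⟩, 1,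
    Or.inr (Or.inr rfl), ?_, ?_, ?_, ⟨0, 1⟩, ?_, ?_⟩
  · norm_num [Complex.ext_iff]
  · norm_num [Complex.ext_iff]
  · norm_num [Complex.ext_iff]
  · norm_num [Complex.ext_iff]
  · norm_num [Complex.ext_iff]
  · apply mem_interior_tri <;> norm_num [det3]
  · norm_num [triArea, Complex.mul_im, Complex.sub_re, Complex.sub_im, Complex.conj_re,
      Complex.conj_im, abs_of_pos]
  · norm_num [triArea, Complex.mul_im, Complex.sub_re, Complex.sub_im, Complex.conj_re,
      Complex.conj_im, abs_of_pos]
  · norm_num [triArea, Complex.mul_im, Complex.sub_re, Complex.sub_im, Complex.conj_re,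
      Complex.conj_im, abs_of_pos]
  · simp only [derivative_mul, derivative_X, derivative_sub, derivative_C, derivative_one,
      eval_mul, eval_add, eval_sub, eval_X, eval_C, eval_one]
    norm_num [Complex.ext_iff, Complex.mul_re, Complex.mul_im, Complex.sub_re, Complex.sub_im,
      Complex.add_re, Complex.add_im, Complex.one_re, Complex.one_im]
  · apply mem_interior_tri <;> norm_num [det3]
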